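/- If an irreducible s-representation m of a compact Lie algebra h admits an h-invariant orthogonal complex structure J, then the element a_J := Σ_i [e_i, Je_i] (sum over an orthonormal basis of m) lies in the center of h and is nonzero; in particular h is not semisimple. -/

import Mathlib

open scoped BigOperators

/-- If an irreducible s-representation `m` of a compact Lie algebra
`(h, B_h)` admits an `h`-invariant orthogonal complex structure `J`, then
`a_J := ∑ᵢ [eᵢ, Jeᵢ]` (sum over a `B_m`-orthonormal basis) is a nonzero central
element of `h`; in particular `h` is not semisimple. -/
theorem aJ_central_nonzero_not_semisimple
    {H M : Type*} [LieRing H] [LieAlgebra ℝ H] [Nontrivial H]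
    [AddCommGroup M] [Module ℝ M]
    (ρ : H →ₗ[ℝ] M →ₗ[ℝ] M)
    (hρLie : ∀ (a b : H) (v : M), ρ ⁅a, b⁆ v = ρ a (ρ b v) - ρ b (ρ a v))
    (hfaith : Function.Injective ρ)
    (BH : H →ₗ[ℝ] H →ₗ[ℝ] ℝ) (BM : M →ₗ[ℝ] M →ₗ[ℝ] ℝ)
    (hBHsym : ∀ x y : H, BH x y = BH y x)
    (hBHpos : ∀ x : H, x ≠ 0 → 0 < BH x x)
    (hBHinv : ∀ a x y : H, BH ⁅a, x⁆ y + BH x ⁅a, y⁆ = 0)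
    (hBMsym : ∀ u v : M, BM u v = BM v u)
    (hBMpos : ∀ v : M, v ≠ 0 → 0 < BM v v)
    (hskew : ∀ (a : H) (u v : M), BM (ρ a u) v + BM u (ρ a v) = 0)
    (hirr : ∀ p : Submodule ℝ M, (∀ (a : H), ∀ v ∈ p, ρ a v ∈ p) → p = ⊥ ∨ p = ⊤)
    (n : ℕ) (e : Module.Basis (Fin n) ℝ M)
    (hON : ∀ i j, BM (e i) (e j) = if i = j then 1 else 0)
    (J : M →ₗ[ℝ] M)
    (hJ2 : ∀ v : M, J (J v) = -v)
    (hJequiv : ∀ (a : H) (v : M), J (ρ a v) = ρ a (J v))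
    (hJorth : ∀ u v : M, BM (J u) (J v) = BM u v)
    (br : M →ₗ[ℝ] M →ₗ[ℝ] H)
    (hbr : ∀ (a : H) (v w : M), BH a (br v w) = BM (ρ a v) w)
    (hequiv : ∀ (a : H) (v w : M), ⁅a, br v w⁆ = br (ρ a v) w + br v (ρ a w))
    (hjacobi : ∀ u v w : M, ρ (br u v) w + ρ (br v w) u + ρ (br w u) v = 0) :
    (∀ a : H, ⁅a, ∑ i, br (e i) (J (e i))⁆ = 0) ∧
    (∑ i, br (e i) (J (e i))) ≠ 0 ∧
    ¬ LieAlgebra.IsSemisimple ℝ H := by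
  -- Basic nondegeneracy facts
  have hBHnn : ∀ x : H, 0 ≤ BH x x := by
    intro x
    rcases eq_or_ne x 0 with h | h
    · simp [h]
    · exact (hBHpos x h).le
  have hBH0 : ∀ x : H, (∀ a : H, BH a x = 0) → x = 0 := by
    intro x hx
    by_contra h
    exact absurd ((hBHsym x x).trans (hx x)) (hBHpos x h).ne'
  have hBM0 : ∀ v : M, (∀ w : M, BM v w = 0) → v = 0 := by
    intro v hv
    by_contra h
    exact absurd (hv v) (hBMpos v h).ne'
  -- Orthonormal expansion
  have hrepr : ∀ (v : M) (k : Fin n), BM v (e k) = e.repr v k := by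
    intro v k
    conv_lhs => rw [← e.sum_repr v]
    simp only [map_sum, LinearMap.coe_sum, Finset.sum_apply, map_smul,
      LinearMap.smul_apply, LinearMap.map_smul₂, hON, smul_eq_mul,
      mul_ite, mul_one, mul_zero]
    rw [Finset.sum_ite_eq' Finset.univ k (fun j => (e.repr v j : ℝ))]
    simp
  have hexpand : ∀ v : M, ∑ j, BM v (e j) • e j = v := by
    intro v
    conv_rhs => rw [← e.sum_repr v]
    exact Finset.sum_congr rfl fun j _ => by rw [hrepr]
  have hL2 : ∀ u v : M, ∑ i, BM u (e i) * BM v (e i) = BM u v := by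
    intro u v
    conv_rhs => rw [← hexpand v]
    rw [map_sum]
    exact Finset.sum_congr rfl fun i _ => by
      rw [map_smul, smul_eq_mul, mul_comm]
  -- J is skew-adjoint for BM
  have hJsk : ∀ u v : M, BM (J u) v = -BM u (J v) := by
    intro u v
    conv_lhs => rw [show v = -(J (J v)) by rw [hJ2 v, neg_neg]]
    rw [map_neg, hJorth]
  -- the bracket is antisymmetric
  have hbrskew : ∀ v w : M, br w v = -br v w := by
    intro v w
    refine eq_neg_of_add_eq_zero_left (hBH0 _ fun a => ?_)
    rw [map_add, hbr a w v, hbr a v w, hBMsym (ρ a w) v]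
    linarith [hskew a v w]
  have lie_sum' : ∀ (a : H) (f : Fin n → H), ⁅a, ∑ i, f i⁆ = ∑ i, ⁅a, f i⁆ := by
    intro a f
    have h : ⁅a, ∑ i, f i⁆ = (LieAlgebra.ad ℝ H a) (∑ i, f i) := rfl
    rw [h, map_sum]
    simp [LieAlgebra.ad_apply]
  -- PART 1 : centrality
  have hcentral : ∀ a : H, ⁅a, ∑ i, br (e i) (J (e i))⁆ = 0 := by
    intro a
    rw [lie_sum']
    have hterm : ∀ i, ⁅a, br (e i) (J (e i))⁆
        = br (ρ a (e i)) (J (e i)) + br (e i) (J (ρ a (e i))) := by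
      intro i
      rw [hequiv, hJequiv]
    have h1 : ∀ i, br (ρ a (e i)) (J (e i))
        = ∑ j, BM (ρ a (e i)) (e j) • br (e j) (J (e i)) := by
      intro i
      conv_lhs => rw [← hexpand (ρ a (e i))]
      simp only [map_sum, map_smul, LinearMap.coe_sum, Finset.sum_apply,
        LinearMap.smul_apply]
    have h2 : ∀ i, br (e i) (J (ρ a (e i)))
        = ∑ j, BM (ρ a (e i)) (e j) • br (e i) (J (e j)) := by
      intro i
      conv_lhs => rw [← hexpand (ρ a (e i))]
      simp only [map_sum, map_smul]
    have hc : ∀ i j : Fin n, BM (ρ a (e j)) (e i) = -BM (ρ a (e i)) (e j) := by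
      intro i j
      have h3 := hskew a (e j) (e i)
      have h4 : BM (e j) (ρ a (e i)) = BM (ρ a (e i)) (e j) := hBMsym _ _
      linarith
    calc ∑ i, ⁅a, br (e i) (J (e i))⁆
        = ∑ i, (br (ρ a (e i)) (J (e i)) + br (e i) (J (ρ a (e i)))) :=
          Finset.sum_congr rfl fun i _ => hterm i
      _ = (∑ i, ∑ j, BM (ρ a (e i)) (e j) • br (e j) (J (e i)))
          + ∑ i, ∑ j, BM (ρ a (e i)) (e j) • br (e i) (J (e j)) := by
          rw [Finset.sum_add_distrib]
          exact congrArg₂ (· + ·) (Finset.sum_congr rfl fun i _ => h1 i)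
            (Finset.sum_congr rfl fun i _ => h2 i)
      _ = 0 := by
          rw [Finset.sum_comm]
          rw [← Finset.sum_add_distrib]
          refine Finset.sum_eq_zero fun i _ => ?_
          rw [← Finset.sum_add_distrib]
          refine Finset.sum_eq_zero fun j _ => ?_
          rw [hc _ _, neg_smul, neg_add_cancel]
  -- The auxiliary bilinear trace identity: summing over the orthonormal
  -- basis (J e i) gives the same result as summing over (e i).
  have hL3 : ∀ G : M →ₗ[ℝ] M →ₗ[ℝ] ℝ,
      ∑ i, G (J (e i)) (J (e i)) = ∑ i, G (e i) (e i) := by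
    intro G
    have expand2 : ∀ u : M,
        G u u = ∑ j, ∑ k, BM u (e j) * (BM u (e k) * G (e j) (e k)) := by
      intro u
      conv_lhs => rw [← hexpand u]
      simp only [map_sum, map_smul, LinearMap.coe_sum, Finset.sum_apply,
        LinearMap.smul_apply, smul_eq_mul, Finset.mul_sum]
      rw [Finset.sum_comm]
      exact Finset.sum_congr rfl fun j _ => Finset.sum_congr rfl fun k _ => by ring
    calc ∑ i, G (J (e i)) (J (e i))
        = ∑ i, ∑ j, ∑ k, BM (J (e i)) (e j) * (BM (J (e i)) (e k) * G (e j) (e k)) :=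
          Finset.sum_congr rfl fun i _ => expand2 _
      _ = ∑ j, ∑ k, (∑ i, BM (J (e j)) (e i) * BM (J (e k)) (e i)) * G (e j) (e k) := by
          rw [Finset.sum_comm]
          refine Finset.sum_congr rfl fun j _ => ?_
          rw [Finset.sum_comm]
          refine Finset.sum_congr rfl fun k _ => ?_
          rw [Finset.sum_mul]
          refine Finset.sum_congr rfl fun i _ => ?_
          have e1 : BM (J (e i)) (e j) = -BM (J (e j)) (e i) := by
            rw [hJsk (e i) (e j), hBMsym, hJsk (e j) (e i), neg_neg, hBMsym]
          have e2 : BM (J (e i)) (e k) = -BM (J (e k)) (e i) := by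
            rw [hJsk (e i) (e k), hBMsym, hJsk (e k) (e i), neg_neg, hBMsym]
          rw [e1, e2]
          ring
      _ = ∑ j, ∑ k, BM (e j) (e k) * G (e j) (e k) := by
          refine Finset.sum_congr rfl fun j _ => Finset.sum_congr rfl fun k _ => ?_
          rw [hL2, hJorth]
      _ = ∑ j, G (e j) (e j) := by
          refine Finset.sum_congr rfl fun j _ => ?_
          simp only [hON, ite_mul, one_mul, zero_mul]
          rw [Finset.sum_ite_eq Finset.univ j (fun k => G (e j) (e k))]
          simp
  -- The auxiliary quantity S
  set Sf : M → M → ℝ := fun x y => ∑ i, BM (ρ (br x (e i)) y) (J (e i)) with hSf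
  have hSswap : ∀ x y : M, Sf x y = -Sf y x := by
    intro x y
    have h1 : Sf x y = ∑ i, BM (ρ (br y (J (e i))) x) (e i) := by
      refine Finset.sum_congr rfl fun i _ => ?_
      rw [← hbr, hBHsym, hbr]
    set G : M →ₗ[ℝ] M →ₗ[ℝ] ℝ := BM.comp ((ρ.flip x).comp ((br y).comp J)) with hG
    have hGapp : ∀ u w : M, G u w = BM (ρ (br y (J u)) x) w := fun u w => rfl
    have h2 : Sf x y = ∑ i, G (e i) (e i) := by
      rw [h1]
      exact Finset.sum_congr rfl fun i _ => (hGapp _ _).symm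
    rw [h2, ← hL3 G]
    have h3 : ∀ i, G (J (e i)) (J (e i)) = -BM (ρ (br y (e i)) x) (J (e i)) := by
      intro i
      rw [hGapp, hJ2]
      simp
    rw [Finset.sum_congr rfl fun i _ => h3 i, hSf]
    simp
  -- Key positivity identity
  have hSvJv : ∀ v : M, Sf v (J v) = ∑ i, BH (br v (e i)) (br v (e i)) := by
    intro v
    refine Finset.sum_congr rfl fun i _ => ?_
    rw [← hJequiv, hJorth, ← hbr]
  have hBkey : ∀ v : M, BM (ρ (∑ i, br (e i) (J (e i))) v) (J v)
      = 2 * ∑ i, BH (br v (e i)) (br v (e i)) := by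
    intro v
    have s1 : BM (ρ (∑ i, br (e i) (J (e i))) v) (J v)
        = ∑ i, BM (ρ (br v (J v)) (e i)) (J (e i)) := by
      rw [← hbr]
      rw [map_sum, LinearMap.sum_apply]
      refine Finset.sum_congr rfl fun i _ => ?_
      rw [hBHsym, hbr]
    have s2 : ∀ i, ρ (br v (J v)) (e i)
        = -(ρ (br (J v) (e i)) v) + ρ (br v (e i)) (J v) := by
      intro i
      have hj := hjacobi v (J v) (e i)
      have hb : br (e i) v = -br v (e i) := hbrskew v (e i)
      rw [hb] at hj
      simp only [map_neg, LinearMap.neg_apply] at hj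
      linear_combination (norm := module) hj
    rw [s1]
    have s3 : ∑ i, BM (ρ (br v (J v)) (e i)) (J (e i))
        = -Sf (J v) v + Sf v (J v) := by
      rw [hSf]
      simp only []
      rw [← Finset.sum_neg_distrib, ← Finset.sum_add_distrib]
      refine Finset.sum_congr rfl fun i _ => ?_
      rw [s2 i]
      simp [map_add, map_neg]
    rw [s3, hSswap (J v) v, neg_neg, hSvJv]
    ring
  -- br is not identically zero
  have hbrne : ∃ (j i : Fin n), br (e j) (e i) ≠ 0 := by
    by_contra hcon
    push_neg at hcon
    have hbr0 : ∀ v w : M, br v w = 0 := by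
      intro v w
      conv_lhs => rw [← hexpand v, ← hexpand w]
      simp only [map_sum, map_smul, LinearMap.coe_sum, Finset.sum_apply,
        LinearMap.smul_apply, hcon, smul_zero, Finset.sum_const_zero]
    have hrho0 : ∀ (a : H) (v : M), ρ a v = 0 := by
      intro a v
      refine hBM0 _ fun w => ?_
      rw [← hbr, hbr0, map_zero]
    obtain ⟨x, hx⟩ := exists_ne (0 : H)
    apply hx
    apply hfaith
    ext v
    rw [hrho0, map_zero]
    rfl
  -- PART 2 : nonvanishing
  have hBHaa : BH (∑ i, br (e i) (J (e i))) (∑ i, br (e i) (J (e i)))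
      = 2 * ∑ j, ∑ i, BH (br (e j) (e i)) (br (e j) (e i)) := by
    rw [map_sum]
    have : ∀ j : Fin n, BH (∑ i, br (e i) (J (e i))) (br (e j) (J (e j)))
        = 2 * ∑ i, BH (br (e j) (e i)) (br (e j) (e i)) := by
      intro j
      rw [hbr, hBkey]
    rw [Finset.sum_congr rfl fun j _ => this j, Finset.mul_sum]
  have hpos : 0 < BH (∑ i, br (e i) (J (e i))) (∑ i, br (e i) (J (e i))) := by
    rw [hBHaa]
    obtain ⟨j0, i0, hne⟩ := hbrne
    have hterm : ∀ j : Fin n, 0 ≤ ∑ i, BH (br (e j) (e i)) (br (e j) (e i)) :=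
      fun j => Finset.sum_nonneg fun i _ => hBHnn _
    have hj0 : 0 < ∑ i, BH (br (e j0) (e i)) (br (e j0) (e i)) := by
      refine Finset.sum_pos' (fun i _ => hBHnn _) ⟨i0, Finset.mem_univ _, hBHpos _ hne⟩
    have : 0 < ∑ j, ∑ i, BH (br (e j) (e i)) (br (e j) (e i)) :=
      Finset.sum_pos' (fun j _ => hterm j) ⟨j0, Finset.mem_univ _, hj0⟩
    linarith
  have hne0 : (∑ i, br (e i) (J (e i))) ≠ 0 := by
    intro h0
    rw [h0] at hpos
    simp at hpos
  refine ⟨hcentral, hne0, ?_⟩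
  -- PART 3 : not semisimple
  intro hss
  have hcenter : (∑ i, br (e i) (J (e i))) ∈ LieAlgebra.center ℝ H :=
    (LieModule.mem_maxTrivSubmodule ℝ H H _).mpr hcentral
  rw [LieAlgebra.center_eq_bot, LieSubmodule.mem_bot] at hcenter
  exact hne0 hcenter
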